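/- Let A ⊆ Z^d be a finite set affinely spanning R^d. Then the sublattice index of A equals the greatest common divisor of the normalized volumes |det(a_1 - a_0, ..., a_d - a_0)| over all (d+1)-tuples (a_0, a_1, ..., a_d) of points of A that are affinely independent. -/

import Mathlib

/-- The subgroup of `ℤᵈ` generated by all differences of points of `A`;
the sublattice index of `A` is the index of this subgroup. -/
def diffLat {d : ℕ} (A : Set (Fin d → ℤ)) : AddSubgroup (Fin d → ℤ) :=
  AddSubgroup.closure {v | ∃ x ∈ A, ∃ y ∈ A, v = x - y}

/-- `A` affinely spans `ℝᵈ`. -/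
def AffSpanning {d : ℕ} (A : Set (Fin d → ℤ)) : Prop :=
  affineSpan ℝ ((fun v : Fin d → ℤ => fun i => (v i : ℝ)) '' A) = ⊤

/-- The normalized volume of the simplex with vertices `f 0, …, f d`. -/
def normVol {d : ℕ} (f : Fin (d + 1) → (Fin d → ℤ)) : ℕ :=
  (Matrix.det (Matrix.of fun i j : Fin d => (f i.succ - f 0) j)).natAbs


open Submodule

lemma quot_span_equiv_pi {ι R M : Type*} [Fintype ι] [DecidableEq ι] [CommRing R] [IsDomain R]
    [IsPrincipalIdealRing R] [AddCommGroup M] [Module R M] (b : Module.Basis ι R M) (v : ι → M)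
    (hv : LinearIndependent R v) :
    ∃ a' : ι → R, Associated (b.det v) (∏ i, a' i) ∧
      Nonempty ((M ⧸ Submodule.span R (Set.range v)) ≃ₗ[R]
        Π i, R ⧸ Ideal.span ({a' i} : Set R)) := by
  set N := Submodule.span R (Set.range v) with hN
  obtain ⟨n, ⟨bM, bN', f, a, hsnf⟩⟩ := N.smithNormalForm b
  have hn : n = Fintype.card ι := by
    simpa using Fintype.card_congr (Module.Basis.indexEquiv bN' (Module.Basis.span hv))
  have hbij : Function.Bijective f :=
    (Fintype.bijective_iff_injective_and_card f).mpr ⟨f.injective, by simp [hn]⟩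
  let e : Fin n ≃ ι := Equiv.ofBijective f hbij
  have hef : ∀ j, f j = e j := fun _ => rfl
  refine ⟨fun i => a (e.symm i), ?_, ?_⟩
  · -- determinant associated to product
    set a' : ι → R := fun i => a (e.symm i) with ha'
    let bN2 : Module.Basis ι R N := bN'.reindex e
    let T : M →ₗ[R] M := N.subtype ∘ₗ (bM.equiv bN2 (Equiv.refl ι) : M →ₗ[R] N)
    have hT : ∀ i, T (bM i) = a' i • bM i := by
      intro i
      have h1 : T (bM i) = ((bM.equiv bN2 (Equiv.refl ι)) (bM i) : M) := rfl
      rw [h1, bM.equiv_apply, Equiv.refl_apply]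
      have h2 : bN2 i = bN' (e.symm i) := bN'.reindex_apply e i
      rw [h2, hsnf (e.symm i), hef (e.symm i), Equiv.apply_symm_apply]
    have hdetT : LinearMap.det T = ∏ i, a' i := by
      rw [← LinearMap.det_toMatrix bM]
      have hmat : LinearMap.toMatrix bM bM T = Matrix.diagonal a' := by
        ext i j
        rw [LinearMap.toMatrix_apply, hT, LinearEquiv.map_smul, Module.Basis.repr_self,
          Finsupp.smul_apply, Finsupp.single_apply, Matrix.diagonal_apply]
        by_cases h : i = j <;> simp [h, eq_comm]
      rw [hmat, Matrix.det_diagonal]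
    have h1 : b.det v = b.det ((N.subtype : N →ₗ[R] M) ∘ (Module.Basis.span hv)) := by
      congr 1
      ext i
      simp [Module.Basis.span_apply hv i]
    rw [h1, Module.Basis.det_comp_basis, ← hdetT]
    exact LinearMap.associated_det_comp_equiv _ _ _
  · -- quotient equivalence
    set a' : ι → R := fun i => a (e.symm i) with ha'
    have key : ∀ (c : Fin n → R),
        (∑ j, c j • ((bN' j : M))) = ∑ i, (a' i * c (e.symm i)) • bM i := by
      intro c
      rw [← Equiv.sum_comp e (fun i => (a' i * c (e.symm i)) • bM i)]
      refine Finset.sum_congr rfl fun j _ => ?_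
      simp only [ha', Equiv.symm_apply_apply]
      rw [hsnf j, hef j, mul_comm, mul_smul]
    have mem_N_iff : ∀ x, x ∈ N ↔ ∀ i, a' i ∣ bM.repr x i := by
      intro x
      rw [bN'.mem_submodule_iff']
      constructor
      · rintro ⟨c, rfl⟩ i
        rw [key c, bM.repr_sum_self]
        exact ⟨c (e.symm i), rfl⟩
      · intro h
        choose c hc using h
        refine ⟨fun j => c (e j), ?_⟩
        refine bM.ext_elem fun i => ?_
        rw [key, bM.repr_sum_self, hc i, Equiv.apply_symm_apply]
    let I' : Submodule R (ι → R) := Submodule.pi Set.univ fun i => Ideal.span ({a' i} : Set R)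
    have hmap : Submodule.map (bM.equivFun : M →ₗ[R] ι → R) N = I' := by
      ext x
      simp only [I', Submodule.mem_map, Submodule.mem_pi, Ideal.mem_span_singleton, Set.mem_univ,
        mem_N_iff, forall_true_left, LinearEquiv.coe_coe, Module.Basis.equivFun_apply]
      constructor
      · rintro ⟨y, hy, rfl⟩ i; exact hy i
      · intro hdvd
        refine ⟨∑ i, x i • bM i, fun i => ?_, ?_⟩
        · rw [bM.repr_sum_self]; exact hdvd i
        · ext i; rw [bM.repr_sum_self]
    exact ⟨(Submodule.Quotient.equiv N I' bM.equivFun hmap).trans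
      (Submodule.quotientPi (show _ → Submodule R R from fun i => Ideal.span ({a' i} : Set R)))⟩

lemma card_quot_span_eq_natAbs_det {ι M : Type*} [Fintype ι] [DecidableEq ι]
    [AddCommGroup M] [Module ℤ M] (b : Module.Basis ι ℤ M) (v : ι → M)
    (hv : LinearIndependent ℤ v) :
    Nat.card (M ⧸ Submodule.span ℤ (Set.range v)) = (b.det v).natAbs := by
  obtain ⟨a', hassoc, ⟨eq⟩⟩ := quot_span_equiv_pi b v hv
  letI : Module ℤ (M ⧸ Submodule.span ℤ (Set.range v)) :=
    Submodule.Quotient.module _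
  rw [Nat.card_congr eq.toEquiv, Nat.card_pi]
  have h1 : ∀ i, Nat.card (ℤ ⧸ Ideal.span ({a' i} : Set ℤ)) = (a' i).natAbs := fun i => by
    rw [Nat.card_congr (Int.quotientSpanEquivZMod (a' i)).toEquiv, Nat.card_zmod]
  simp_rw [h1]
  rw [Int.natAbs_eq_iff_associated.mpr hassoc]
  exact (map_prod Int.natAbsHom a' Finset.univ).symm

/-- The coordinatewise cast `ℤᵈ → ℝᵈ` as a `ℤ`-linear map. -/
def castFun (d : ℕ) : (Fin d → ℤ) →ₗ[ℤ] (Fin d → ℝ) where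
  toFun x := fun j => (x j : ℝ)
  map_add' x y := by ext j; push_cast; simp
  map_smul' c x := by ext j; push_cast; simp


lemma diffLat_eq_span {d : ℕ} (A : Set (Fin d → ℤ)) :
    diffLat A = (Submodule.span ℤ {v | ∃ x ∈ A, ∃ y ∈ A, v = x - y}).toAddSubgroup := by
  apply le_antisymm
  · exact (AddSubgroup.closure_le _).mpr (fun x hx => Submodule.subset_span hx)
  · intro x hx
    have h : Submodule.span ℤ {v | ∃ x ∈ A, ∃ y ∈ A, v = x - y} ≤
        AddSubgroup.toIntSubmodule (AddSubgroup.closure {v | ∃ x ∈ A, ∃ y ∈ A, v = x - y}) :=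
      Submodule.span_le.mpr (fun v hv => AddSubgroup.subset_closure hv)
    exact h hx

/-- equivalence Fin d ≃ nonzero elements of Fin (d+1) -/
def finSuccNeZeroEquiv (d : ℕ) : Fin d ≃ {x : Fin (d + 1) // x ≠ 0} where
  toFun i := ⟨i.succ, Fin.succ_ne_zero i⟩
  invFun x := (x : Fin (d + 1)).pred x.2
  left_inv i := by simp
  right_inv x := by ext; simp

lemma affineIndependent_iff_det {d : ℕ} (F : Fin (d + 1) → (Fin d → ℤ)) :
    AffineIndependent ℝ (fun k => fun j => ((F k j : ℝ))) ↔
      Matrix.det (Matrix.of fun i j : Fin d => (((F i.succ - F 0) j : ℤ) : ℝ)) ≠ 0 := by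
  classical
  rw [affineIndependent_iff_linearIndependent_vsub ℝ _ 0]
  have hrows : (fun i : Fin d => (Matrix.of fun i j : Fin d => (((F i.succ - F 0) j : ℤ) : ℝ)) i)
      = (fun i : {x : Fin (d+1) // x ≠ 0} =>
          (fun j => (F (i : Fin (d+1)) j : ℝ)) -ᵥ fun j => (F 0 j : ℝ)) ∘ (finSuccNeZeroEquiv d) := by
    funext i
    ext j
    simp only [Matrix.of_apply, Function.comp_apply, finSuccNeZeroEquiv, Equiv.coe_fn_mk,
      vsub_eq_sub, Pi.sub_apply]
    push_cast
    ring
  rw [← linearIndependent_equiv (finSuccNeZeroEquiv d), ← hrows]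
  exact Matrix.linearIndependent_rows_iff_isUnit.trans
    (by rw [Matrix.isUnit_iff_isUnit_det, isUnit_iff_ne_zero])


lemma cast_det_eq {d : ℕ} (v : Fin d → Fin d → ℤ) :
    Matrix.det (Matrix.of fun i j => ((v i j : ℤ) : ℝ)) = ((Matrix.det (Matrix.of v) : ℤ) : ℝ) := by
  have h := RingHom.map_det (Int.castRingHom ℝ) (Matrix.of v)
  have h2 : (Int.castRingHom ℝ).mapMatrix (Matrix.of v) = Matrix.of fun i j => ((v i j : ℤ) : ℝ) := by
    ext i j
    rfl
  rw [← h2]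
  exact h.symm

lemma basisFun_det_eq {d : ℕ} (v : Fin d → Fin d → ℤ) :
    (Pi.basisFun ℤ (Fin d)).det v = Matrix.det (Matrix.of v) := by
  rw [Pi.basisFun_det]
  rfl


/-- The sublattice index of `A` equals the gcd of the normalized volumes of all
`(d+1)`-tuples of affinely independent points of `A`: it divides all such volumes,
and any common divisor of them divides the index. -/
theorem stmt5 {d : ℕ} (hd : 0 < d) (A : Set (Fin d → ℤ)) (hAfin : A.Finite)
    (hA : AffSpanning A) :
    (∀ f : Fin (d + 1) → (Fin d → ℤ), (∀ k, f k ∈ A) →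
        AffineIndependent ℝ (fun k => fun i => ((f k i : ℝ))) →
        (diffLat A).index ∣ normVol f) ∧
    (∀ c : ℕ, (∀ f : Fin (d + 1) → (Fin d → ℤ), (∀ k, f k ∈ A) →
        AffineIndependent ℝ (fun k => fun i => ((f k i : ℝ))) →
        c ∣ normVol f) → c ∣ (diffLat A).index) := by
  classical
  set b : Module.Basis (Fin d) ℤ (Fin d → ℤ) := Pi.basisFun ℤ (Fin d) with hb
  set S : Set (Fin d → ℤ) := {v | ∃ x ∈ A, ∃ y ∈ A, v = x - y} with hSdef
  set N : Submodule ℤ (Fin d → ℤ) := Submodule.span ℤ S with hNdef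
  have hidx : (diffLat A).index = Nat.card ((Fin d → ℤ) ⧸ N) := by
    rw [diffLat_eq_span]
    rfl
  constructor
  · -- index divides each normalized volume
    intro f hf hind
    set v : Fin d → (Fin d → ℤ) := fun i => f i.succ - f 0 with hv
    have hdetne : Matrix.det (Matrix.of fun i j : Fin d => ((v i j : ℤ) : ℝ)) ≠ 0 := by
      have := (affineIndependent_iff_det f).mp hind
      exact this
    have hliR : LinearIndependent ℝ (fun i : Fin d => (castFun d) (v i)) := by
      have hli := Matrix.linearIndependent_rows_iff_isUnit.mpr
        ((Matrix.isUnit_iff_isUnit_det _).mpr (isUnit_iff_ne_zero.mpr hdetne))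
      exact hli
    have hliZ : LinearIndependent ℤ v := by
      apply LinearIndependent.of_comp (castFun d)
      exact hliR.restrict_scalars (by intro a b h; simpa using h)
    have hle : Submodule.span ℤ (Set.range v) ≤ N := by
      rw [Submodule.span_le]
      rintro x ⟨i, rfl⟩
      exact Submodule.subset_span ⟨f i.succ, hf _, f 0, hf _, rfl⟩
    have hdvd : (diffLat A).index ∣ ((Submodule.span ℤ (Set.range v)).toAddSubgroup).index := by
      rw [diffLat_eq_span]
      exact AddSubgroup.index_dvd_of_le (fun x hx => hle hx)
    have hcard : ((Submodule.span ℤ (Set.range v)).toAddSubgroup).index = (b.det v).natAbs := by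
      have := card_quot_span_eq_natAbs_det b v hliZ
      rw [← this]
      rfl
    have hnv : normVol f = (b.det v).natAbs := by
      rw [normVol, hb, basisFun_det_eq]
    rw [hnv, ← hcard]
    exact hdvd
  · -- any common divisor divides the index
    intro c hc
    have hAne : A.Nonempty := by
      by_contra h
      rw [Set.not_nonempty_iff_eq_empty] at h
      rw [AffSpanning, h, Set.image_empty] at hA
      simp only [AffineSubspace.span_empty] at hA
      exact AffineSubspace.bot_ne_top ℝ (Fin d → ℝ) (Fin d → ℝ) hA
    obtain ⟨a₀, ha₀⟩ := hAne
    set t : Finset (Fin d → ℤ) := hAfin.toFinset.image (fun a => a - a₀) with ht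
    have hNt : N = Submodule.span ℤ (t : Set (Fin d → ℤ)) := by
      apply le_antisymm
      · rw [hNdef, Submodule.span_le]
        rintro x ⟨p, hp, q, hq, rfl⟩
        have hp' : p - a₀ ∈ Submodule.span ℤ (t : Set (Fin d → ℤ)) :=
          Submodule.subset_span (by
            simp only [ht, Finset.coe_image, Set.mem_image, Finset.mem_coe,
              Set.Finite.mem_toFinset]
            exact ⟨p, hp, rfl⟩)
        have hq' : q - a₀ ∈ Submodule.span ℤ (t : Set (Fin d → ℤ)) :=
          Submodule.subset_span (by
            simp only [ht, Finset.coe_image, Set.mem_image, Finset.mem_coe,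
              Set.Finite.mem_toFinset]
            exact ⟨q, hq, rfl⟩)
        have hpq : p - q = (p - a₀) - (q - a₀) := by ring
        rw [hpq]
        exact Submodule.sub_mem _ hp' hq'
      · rw [Submodule.span_le]
        intro x hx
        simp only [ht, Finset.coe_image, Set.mem_image, Finset.mem_coe,
          Set.Finite.mem_toFinset] at hx
        obtain ⟨p, hp, rfl⟩ := hx
        exact Submodule.subset_span ⟨p, hp, a₀, ha₀, rfl⟩
    obtain ⟨n, bN0⟩ := Submodule.basisOfPid b N
    have hliZbN : LinearIndependent ℤ (fun i : Fin n => (bN0 i : Fin d → ℤ)) :=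
      bN0.linearIndependent.map' N.subtype (Submodule.ker_subtype N)
    have hnled : n ≤ d := by
      have h1 := hliZbN.fintype_card_le_finrank
      simpa [Module.finrank_pi] using h1
    have hcast_mem : ∀ z ∈ N, (castFun d) z ∈
        Submodule.span ℝ (Set.range fun i : Fin n => castFun d (bN0 i)) := by
      intro z hz
      obtain ⟨cz, hcz⟩ := (bN0.mem_submodule_iff').mp hz
      rw [hcz, map_sum]
      refine Submodule.sum_mem _ fun i _ => ?_
      rw [map_smul, ← Int.cast_smul_eq_zsmul ℝ]
      exact Submodule.smul_mem _ _ (Submodule.subset_span ⟨i, rfl⟩)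
    have htop : Submodule.span ℝ (Set.range fun i : Fin n => castFun d (bN0 i)) = ⊤ := by
      rw [eq_top_iff]
      have himg : ((fun v : Fin d → ℤ => fun i => (v i : ℝ)) '' A).Nonempty :=
        ⟨_, ⟨a₀, ha₀, rfl⟩⟩
      have hvs : vectorSpan ℝ ((fun v : Fin d → ℤ => fun i => (v i : ℝ)) '' A) = ⊤ :=
        (AffineSubspace.affineSpan_eq_top_iff_vectorSpan_eq_top_of_nonempty ℝ _ _ himg).mp hA
      rw [← hvs, vectorSpan_def, Submodule.span_le]
      rintro u ⟨x, hx, y, hy, rfl⟩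
      obtain ⟨p, hp, rfl⟩ := hx
      obtain ⟨q, hq, rfl⟩ := hy
      have heq : (fun i => ((p i : ℤ) : ℝ)) -ᵥ (fun i => ((q i : ℤ) : ℝ)) = castFun d (p - q) := by
        ext j
        simp only [vsub_eq_sub, Pi.sub_apply, castFun, LinearMap.coe_mk, AddHom.coe_mk]
        push_cast
        ring
      have hmem2 := hcast_mem (p - q) (Submodule.subset_span ⟨p, hp, q, hq, rfl⟩)
      simpa only [← heq, SetLike.mem_coe] using hmem2
    have hdlen : d ≤ n := by
      have h1 := finrank_span_le_card (R := ℝ) (Set.range fun i : Fin n => castFun d (bN0 i))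
      rw [htop, finrank_top] at h1
      have h2 : (Set.range fun i : Fin n => castFun d (bN0 i)).toFinset.card ≤ n := by
        rw [Set.toFinset_card]
        simpa using Fintype.card_range_le (fun i : Fin n => castFun d (bN0 i))
      have h3 : Module.finrank ℝ (Fin d → ℝ) = d := by simp [Module.finrank_pi]
      omega
    have hnd : n = d := le_antisymm hnled hdlen
    obtain ⟨bN1, hliZbN1⟩ : ∃ bb : Module.Basis (Fin d) ℤ N,
        LinearIndependent ℤ (fun i : Fin d => (bb i : Fin d → ℤ)) := by
      subst hnd
      exact ⟨bN0, hliZbN⟩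
    have hspan : Submodule.span ℤ (Set.range fun i : Fin d => (bN1 i : Fin d → ℤ)) = N := by
      have h1 : (Set.range fun i : Fin d => (bN1 i : Fin d → ℤ)) =
          N.subtype '' Set.range bN1 := by
        rw [← Set.range_comp]
        rfl
      rw [h1, ← Submodule.map_span, Module.Basis.span_eq, Submodule.map_subtype_top]
    have hidx2 : (diffLat A).index = (b.det fun i : Fin d => (bN1 i : Fin d → ℤ)).natAbs := by
      have e0 : ((Fin d → ℤ) ⧸ N) ≃ₗ[ℤ]
          ((Fin d → ℤ) ⧸ Submodule.span ℤ (Set.range fun i : Fin d => (bN1 i : Fin d → ℤ))) :=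
        Submodule.quotEquivOfEq _ _ hspan.symm
      rw [hidx]
      exact (Nat.card_congr e0.toEquiv).trans (card_quot_span_eq_natAbs_det b _ hliZbN1)
    have hmem : ∀ i : Fin d, (bN1 i : Fin d → ℤ) ∈
        Submodule.span ℤ ((t : Set (Fin d → ℤ))) := fun i => hNt ▸ (bN1 i).2
    choose g hg using fun i : Fin d => mem_span_finset.mp (hmem i)
    -- divisibility of each elementary determinant
    have hkey : ∀ r : Fin d → (Fin d → ℤ), (∀ i, r i ∈ t) →
        (c : ℤ) ∣ b.det (fun i => r i) := by
      intro r hr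
      have hrA : ∀ i, ∃ p ∈ A, p - a₀ = r i := by
        intro i
        have := hr i
        simp only [ht, Finset.mem_image, Set.Finite.mem_toFinset] at this
        exact this
      choose aa haaA haar using hrA
      set F : Fin (d + 1) → (Fin d → ℤ) := Fin.cases a₀ aa with hF
      have hFmem : ∀ k, F k ∈ A := by
        intro k
        induction k using Fin.cases with
        | zero => simpa [hF] using ha₀
        | succ i => simpa [hF] using haaA i
      have hFd : ∀ i : Fin d, F i.succ - F 0 = r i := by
        intro i
        simp only [hF, Fin.cases_zero, Fin.cases_succ]
        exact haar i
      have hdet_eq : b.det (fun i => r i) = Matrix.det (Matrix.of fun i j => (F i.succ - F 0) j) := by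
        rw [basisFun_det_eq]
        refine congrArg Matrix.det ?_
        funext i j
        exact (congrFun (hFd i) j).symm
      by_cases hai : AffineIndependent ℝ (fun k => fun j => ((F k j : ℝ)))
      · have h1 := hc F hFmem hai
        rw [normVol] at h1
        rw [hdet_eq]
        exact Int.natAbs_dvd_natAbs.mp (by simpa using h1)
      · have h0' := (not_iff_not.mpr (affineIndependent_iff_det F)).mp hai
        rw [not_not] at h0'
        have h0 := h0'
        have h0' : ((Matrix.det (Matrix.of fun i j => (F i.succ - F 0) j) : ℤ) : ℝ) = 0 := by
          rw [← cast_det_eq]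
          exact h0
        have h0'' : Matrix.det (Matrix.of fun i j => (F i.succ - F 0) j) = 0 := by
          exact_mod_cast h0'
        rw [hdet_eq, h0'']
        exact dvd_zero _
    have hdvd : (c : ℤ) ∣ b.det (fun i : Fin d => (bN1 i : Fin d → ℤ)) := by
      have hrw : b.det (fun i : Fin d => (bN1 i : Fin d → ℤ)) =
          ∑ r ∈ Fintype.piFinset (fun _ : Fin d => t),
            (∏ i, g i (r i)) • b.det.toMultilinearMap (fun i => r i) := by
        calc b.det (fun i : Fin d => (bN1 i : Fin d → ℤ))
            = b.det.toMultilinearMap (fun i => ∑ u ∈ t, g i u • u) := by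
              show b.det.toMultilinearMap _ = _
              congr 1
              funext i
              exact (hg i).2.symm
          _ = ∑ r ∈ Fintype.piFinset (fun _ : Fin d => t),
                b.det.toMultilinearMap (fun i => g i (r i) • r i) :=
              b.det.toMultilinearMap.map_sum_finset _ _
          _ = _ := Finset.sum_congr rfl fun r _ =>
              b.det.toMultilinearMap.map_smul_univ _ _
      rw [hrw]
      refine Finset.dvd_sum fun r hr => ?_
      rw [smul_eq_mul]
      exact Dvd.dvd.mul_left (hkey (fun i => r i) (fun i => Fintype.mem_piFinset.mp hr i)) _
    rw [hidx2]
    have := Int.natAbs_dvd_natAbs.mpr hdvd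
    simpa using this
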